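/- Let A ↣ B ↠ C be a short exact sequence of R-modules. If A is FP_n^{≤d-1}-injective and B is FP_{n+1}^{≤d}-injective, then C is FP_{n+1}^{≤d}-injective. Dually, if B is FP_n^{≤d}-projective and C is FP_{n+1}^{≤d}-projective, then A is FP_n^{≤d}-projective. -/

import Mathlib

universe u

/-- `M` is a finitely `n`-presented `R`-module. -/
def FinNPres (R : Type u) [Ring R] : ℕ → (M : Type u) → [AddCommGroup M] → [Module R M] → Prop
  | 0, M, _, _ => Module.Finite R M
  | n+1, M, _, _ => ∃ (k : ℕ) (f : (Fin k → R) →ₗ[R] M), Function.Surjective f ∧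
      FinNPres R n (LinearMap.ker f)

/-- `M` has projective dimension at most `d` (finite `d`). -/
def ProjDimLE (R : Type u) [Ring R] : ℕ → (M : Type u) → [AddCommGroup M] → [Module R M] → Prop
  | 0, M, _, _ => Module.Projective R M
  | d+1, M, _, _ => ∃ (ι : Type u) (f : (ι →₀ R) →ₗ[R] M), Function.Surjective f ∧
      ProjDimLE R d (LinearMap.ker f)

/-- Projective dimension at most `d` for `d : ℕ∞`; `d = ⊤` imposes no condition. -/
def ProjDimLE' (R : Type u) [Ring R] (d : ℕ∞) (M : Type u) [AddCommGroup M] [Module R M] : Prop :=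
  ∀ k : ℕ, (k : ℕ∞) = d → ProjDimLE R k M

/-- `Ext¹_R(M, N) = 0`, expressed by the splitting of all extensions of `M` by `N`. -/
def Ext1Zero (R : Type u) [Ring R] (M N : Type u) [AddCommGroup M] [Module R M]
    [AddCommGroup N] [Module R N] : Prop :=
  ∀ (X : Type u) [AddCommGroup X] [Module R X] (i : N →ₗ[R] X) (p : X →ₗ[R] M),
    Function.Injective i → Function.Surjective p → LinearMap.range i = LinearMap.ker p →
    ∃ r : X →ₗ[R] N, r ∘ₗ i = LinearMap.id

/-- `N` is `FPₙ^{≤d}`-injective: `Ext¹_R(K, N) = 0` for every finitely `n`-presented `K`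
of projective dimension at most `d`. -/
def FPdInj (R : Type u) [Ring R] (n : ℕ) (d : ℕ∞) (N : Type u)
    [AddCommGroup N] [Module R N] : Prop :=
  ∀ (K : Type u) [AddCommGroup K] [Module R K],
    FinNPres R n K → ProjDimLE' R d K → Ext1Zero R K N

/-- `M` is `FPₙ^{≤d}`-projective: `Ext¹_R(M, N) = 0` for every `FPₙ^{≤d}`-injective `N`. -/
def FPdProj (R : Type u) [Ring R] (n : ℕ) (d : ℕ∞) (M : Type u)
    [AddCommGroup M] [Module R M] : Prop :=
  ∀ (N : Type u) [AddCommGroup N] [Module R N], FPdInj R n d N → Ext1Zero R M N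


variable {R : Type u} [Ring R]

section SES
variable {N X M : Type u} [AddCommGroup N] [Module R N] [AddCommGroup X] [Module R X]
  [AddCommGroup M] [Module R M]

theorem section_of_retraction (i : N →ₗ[R] X) (p : X →ₗ[R] M)
    (hp : Function.Surjective p) (hex : LinearMap.range i = LinearMap.ker p)
    (r : X →ₗ[R] N) (hr : r ∘ₗ i = LinearMap.id) :
    ∃ s : M →ₗ[R] X, p ∘ₗ s = LinearMap.id := by
  set t : X →ₗ[R] X := LinearMap.id - i ∘ₗ r with ht
  have hker : LinearMap.ker p ≤ LinearMap.ker t := by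
    intro x hx
    rw [← hex] at hx
    obtain ⟨nn, rfl⟩ := hx
    have : r (i nn) = nn := congrArg (fun φ => φ nn) hr
    simp [ht, this]
  let e := p.quotKerEquivOfSurjective hp
  refine ⟨(LinearMap.ker p).liftQ t hker ∘ₗ e.symm.toLinearMap, ?_⟩
  ext m
  obtain ⟨x, rfl⟩ := hp m
  have he : e ((LinearMap.ker p).mkQ x) = p x := rfl
  have hsymm : e.symm (p x) = (LinearMap.ker p).mkQ x := by
    rw [← he, LinearEquiv.symm_apply_apply]
  simp only [LinearMap.comp_apply, LinearMap.id_apply, LinearEquiv.coe_coe, hsymm]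
  have : ((LinearMap.ker p).liftQ t hker) ((LinearMap.ker p).mkQ x) = t x := by
    simp
  rw [this]
  simp [ht, LinearMap.sub_apply]
  have : p (i (r x)) = 0 := by
    have : i (r x) ∈ LinearMap.ker p := hex ▸ LinearMap.mem_range_self i (r x)
    simpa using this
  simp [this]

theorem retraction_of_section (i : N →ₗ[R] X) (p : X →ₗ[R] M) (hi : Function.Injective i)
    (hex : LinearMap.range i = LinearMap.ker p) (s : M →ₗ[R] X)
    (hs : p ∘ₗ s = LinearMap.id) :
    ∃ r : X →ₗ[R] N, (r ∘ₗ i = LinearMap.id ∧ ∀ x, i (r x) = x - s (p x)) := by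
  have hmem : ∀ x : X, x - s (p x) ∈ LinearMap.range i := by
    intro x
    rw [hex, LinearMap.mem_ker, map_sub]
    have : p (s (p x)) = p x := congrArg (fun φ => φ (p x)) hs
    rw [this, sub_self]
  refine ⟨(LinearEquiv.ofInjective i hi).symm.toLinearMap ∘ₗ
    LinearMap.codRestrict (LinearMap.range i) (LinearMap.id - s ∘ₗ p) hmem, ?_, ?_⟩
  · ext nn
    have h0 : p (i nn) = 0 := by
      have : i nn ∈ LinearMap.ker p := hex ▸ LinearMap.mem_range_self i nn
      simpa using this
    have harg : (LinearMap.codRestrict (LinearMap.range i) (LinearMap.id - s ∘ₗ p) hmem) (i nn)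
        = LinearEquiv.ofInjective i hi nn := by
      apply Subtype.ext
      simp [LinearMap.sub_apply, h0, LinearEquiv.ofInjective_apply]
    simp only [LinearMap.comp_apply, LinearMap.id_apply, harg, LinearEquiv.coe_coe,
      LinearEquiv.symm_apply_apply]
  · intro x
    simp only [LinearMap.comp_apply, LinearEquiv.coe_coe]
    have : i ((LinearEquiv.ofInjective i hi).symm
        ((LinearMap.codRestrict (LinearMap.range i) (LinearMap.id - s ∘ₗ p) hmem) x))
        = ((LinearEquiv.ofInjective i hi) ((LinearEquiv.ofInjective i hi).symm
          ((LinearMap.codRestrict (LinearMap.range i) (LinearMap.id - s ∘ₗ p) hmem) x)) : X) := by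
      rw [LinearEquiv.ofInjective_apply]
    rw [this, LinearEquiv.apply_symm_apply]
    simp [LinearMap.sub_apply]

/-- A split short exact sequence gives `X ≃ N × M`. -/
theorem equiv_of_section (i : N →ₗ[R] X) (p : X →ₗ[R] M) (hi : Function.Injective i)
    (hp : Function.Surjective p) (hex : LinearMap.range i = LinearMap.ker p) (s : M →ₗ[R] X)
    (hs : p ∘ₗ s = LinearMap.id) : Nonempty (X ≃ₗ[R] N × M) := by
  obtain ⟨r, hr, hir⟩ := retraction_of_section i p hi hex s hs
  have hps : ∀ m, p (s m) = m := fun m => congrArg (fun φ => φ m) hs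
  have hri : ∀ nn, r (i nn) = nn := fun nn => congrArg (fun φ => φ nn) hr
  refine ⟨LinearEquiv.ofLinear (LinearMap.prod r p) (LinearMap.coprod i s) ?_ ?_⟩
  · apply LinearMap.ext
    rintro ⟨nn, m⟩
    have h0 : p (i nn) = 0 := by
      have : i nn ∈ LinearMap.ker p := hex ▸ LinearMap.mem_range_self i nn
      simpa using this
    have hrs : r (s m) = 0 := by
      have := hir (s m)
      rw [hps] at this
      have h2 : i (r (s m)) = i 0 := by simpa using this
      exact hi h2
    simp only [LinearMap.comp_apply, LinearMap.coprod_apply, LinearMap.prod_apply,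
      Pi.prod, map_add, LinearMap.id_apply]
    exact Prod.ext (by simp [hri, hrs]) (by simp [h0, hps])
  · ext x
    simp only [LinearMap.comp_apply, LinearMap.prod_apply, Function.prod, LinearMap.coprod_apply,
      LinearMap.id_apply, hir]
    abel


variable {R : Type u} [Ring R]
end SES
section Lift
variable {L A B C : Type u} [AddCommGroup L] [Module R L] [AddCommGroup A] [Module R A]
  [AddCommGroup B] [Module R B] [AddCommGroup C] [Module R C]

theorem lift_of_ext1Zero (h : Ext1Zero R L A) (f : A →ₗ[R] B) (g : B →ₗ[R] C)
    (hf : Function.Injective f) (hg : Function.Surjective g)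
    (hex : LinearMap.range f = LinearMap.ker g) (ψ : L →ₗ[R] C) :
    ∃ ψ' : L →ₗ[R] B, g ∘ₗ ψ' = ψ := by
  set P : Submodule R (B × L) :=
    LinearMap.ker (g ∘ₗ LinearMap.fst R B L - ψ ∘ₗ LinearMap.snd R B L) with hP
  have hmemP : ∀ x : B × L, x ∈ P ↔ g x.1 = ψ x.2 := by
    intro x
    simp [hP, LinearMap.mem_ker, sub_eq_zero]
  have hfker : ∀ a : A, g (f a) = 0 := by
    intro a
    have : f a ∈ LinearMap.ker g := hex ▸ LinearMap.mem_range_self f a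
    simpa using this
  let ι : A →ₗ[R] P := LinearMap.codRestrict P (LinearMap.prod f 0)
    (fun a => by rw [hmemP]; simp [hfker a])
  let π : P →ₗ[R] L := LinearMap.snd R B L ∘ₗ P.subtype
  have hιinj : Function.Injective ι := by
    intro a a' haa
    have : f a = f a' := congrArg (fun z => (Subtype.val z).1) haa
    exact hf this
  have hπsurj : Function.Surjective π := by
    intro l
    obtain ⟨b, hb⟩ := hg (ψ l)
    exact ⟨⟨(b, l), (hmemP _).2 hb⟩, rfl⟩
  have hexP : LinearMap.range ι = LinearMap.ker π := by
    apply le_antisymm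
    · rintro _ ⟨a, rfl⟩
      simp [π, ι, LinearMap.mem_ker]
    · rintro ⟨⟨b, l⟩, hbl⟩ hk
      have hl : l = 0 := hk
      have hgb : g b = 0 := by
        have := (hmemP _).1 hbl
        simpa [hl] using this
      obtain ⟨a, ha⟩ : b ∈ LinearMap.range f := hex ▸ (LinearMap.mem_ker.2 hgb)
      exact ⟨a, by apply Subtype.ext; simp [ι, ha, hl]⟩
  obtain ⟨r, hr⟩ := h P ι π hιinj hπsurj hexP
  obtain ⟨s, hs⟩ := section_of_retraction ι π hπsurj hexP r hr
  refine ⟨LinearMap.fst R B L ∘ₗ P.subtype ∘ₗ s, ?_⟩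
  ext l
  have h1 : ((s l : B × L)).2 = l := congrArg (fun φ => φ l) hs
  have h2 := (hmemP (s l : B × L)).1 (s l).2
  simp only [LinearMap.comp_apply, LinearMap.fst_apply, Submodule.subtype_apply]
  rw [h2, h1]

end Lift
section Ext
variable {A B C NN : Type u} [AddCommGroup A] [Module R A]
  [AddCommGroup B] [Module R B] [AddCommGroup C] [Module R C] [AddCommGroup NN] [Module R NN]

/-- If `Ext¹(C, N) = 0` then maps `A → N` extend along injections with cokernel `C`. -/
theorem extend_of_ext1Zero (h : Ext1Zero R C NN) (f : A →ₗ[R] B) (g : B →ₗ[R] C)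
    (hf : Function.Injective f) (hg : Function.Surjective g)
    (hex : LinearMap.range f = LinearMap.ker g) (φ : A →ₗ[R] NN) :
    ∃ φ' : B →ₗ[R] NN, φ' ∘ₗ f = φ := by
  set W : Submodule R (NN × B) := LinearMap.range (LinearMap.prod (-φ) f) with hW
  have hWker : W ≤ LinearMap.ker (g ∘ₗ LinearMap.snd R NN B) := by
    rintro _ ⟨a, rfl⟩
    have : f a ∈ LinearMap.ker g := hex ▸ LinearMap.mem_range_self f a
    simpa [LinearMap.mem_ker] using this
  let ιN : NN →ₗ[R] (NN × B) ⧸ W := W.mkQ ∘ₗ LinearMap.inl R NN B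
  let πC : (NN × B) ⧸ W →ₗ[R] C := W.liftQ (g ∘ₗ LinearMap.snd R NN B) hWker
  have hιinj : Function.Injective ιN := by
    intro x y hxy
    have : ((x : NN), (0 : B)) - (y, 0) ∈ W := by
      rw [← Submodule.Quotient.eq]
      exact hxy
    obtain ⟨a, ha⟩ := this
    have ha1 : -φ a = x - y := congrArg Prod.fst ha
    have ha2 : f a = 0 := by
      have := congrArg Prod.snd ha
      simp at this
      exact this
    have : a = 0 := hf (by simpa using ha2)
    rw [this] at ha1
    simpa [sub_eq_zero] using ha1.symm
  have hπsurj : Function.Surjective πC := by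
    intro c
    obtain ⟨b, rfl⟩ := hg c
    exact ⟨W.mkQ (0, b), by simp [πC]⟩
  have hexP : LinearMap.range ιN = LinearMap.ker πC := by
    apply le_antisymm
    · rintro _ ⟨x, rfl⟩
      simp [ιN, πC, LinearMap.mem_ker]
    · intro z hz
      obtain ⟨⟨x, b⟩, rfl⟩ := W.mkQ_surjective z
      have hgb : g b = 0 := by simpa [πC, LinearMap.mem_ker] using hz
      obtain ⟨a, ha⟩ : b ∈ LinearMap.range f := hex ▸ LinearMap.mem_ker.2 hgb
      refine ⟨x + φ a, ?_⟩
      show W.mkQ (x + φ a, 0) = W.mkQ (x, b)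
      simp only [Submodule.mkQ_apply]
      rw [Submodule.Quotient.eq]
      exact ⟨-a, by simp [← ha]⟩
  obtain ⟨r, hr⟩ := h _ ιN πC hιinj hπsurj hexP
  refine ⟨r ∘ₗ W.mkQ ∘ₗ LinearMap.inr R NN B, ?_⟩
  ext a
  have key : W.mkQ (0, f a) = W.mkQ (φ a, 0) := by
    simp only [Submodule.mkQ_apply]
    rw [Submodule.Quotient.eq]
    exact ⟨a, by simp⟩
  have : r (W.mkQ (0, f a)) = r (W.mkQ (φ a, 0)) := by rw [key]
  simp only [LinearMap.comp_apply, LinearMap.inr_apply, LinearMap.id_apply]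
  rw [this]
  have : W.mkQ (φ a, 0) = ιN (φ a) := rfl
  rw [this]
  exact congrArg (fun ρ => ρ (φ a)) hr

end Ext

theorem projDimLE_of_equiv : ∀ (e : ℕ) {M M' : Type u} [AddCommGroup M] [Module R M]
    [AddCommGroup M'] [Module R M'] (_ : M ≃ₗ[R] M'), ProjDimLE R e M → ProjDimLE R e M'
  | 0, M, M', _, _, _, _, eqv, h => by
    haveI : Module.Projective R M := h
    exact Module.Projective.of_equiv (M := M) eqv
  | (e+1), M, M', _, _, _, _, eqv, h => by
    obtain ⟨ι, f, hs, hk⟩ := h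
    refine ⟨ι, eqv.toLinearMap ∘ₗ f, eqv.surjective.comp hs, ?_⟩
    have hkeq : LinearMap.ker f = LinearMap.ker (eqv.toLinearMap ∘ₗ f) := by
      rw [LinearMap.ker_comp, LinearEquiv.ker, Submodule.comap_bot]
    exact projDimLE_of_equiv e (LinearEquiv.ofEq _ _ hkeq) hk

/-- kernel of `f ∘ e'` is equivalent to kernel of `f`, for `e'` an equivalence. -/
noncomputable def kerCompEquiv {F F' M : Type u} [AddCommGroup F] [Module R F]
    [AddCommGroup F'] [Module R F'] [AddCommGroup M] [Module R M]
    (f : F →ₗ[R] M) (e' : F' ≃ₗ[R] F) :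
    LinearMap.ker (f ∘ₗ e'.toLinearMap) ≃ₗ[R] LinearMap.ker f := by
  refine (e'.submoduleMap (LinearMap.ker (f ∘ₗ e'.toLinearMap))).trans (LinearEquiv.ofEq _ _ ?_)
  ext x
  constructor
  · rintro ⟨y, hy, rfl⟩
    simpa [LinearMap.mem_ker] using hy
  · intro hx
    exact ⟨e'.symm x, by simpa [LinearMap.mem_ker] using hx, by simp⟩

/-- `ker (f × id)` is equivalent to `ker f`. -/
noncomputable def kerProdMapIdEquiv {F M G : Type u} [AddCommGroup F] [Module R F]
    [AddCommGroup M] [Module R M] [AddCommGroup G] [Module R G] (f : F →ₗ[R] M) :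
    LinearMap.ker (f.prodMap (LinearMap.id : G →ₗ[R] G)) ≃ₗ[R] LinearMap.ker f where
  toFun x := ⟨x.1.1, by
    have hx : (f x.1.1, x.1.2) = (0 : M × G) := x.2
    exact congrArg Prod.fst hx⟩
  invFun y := ⟨(y.1, 0), by
    have hy : f y.1 = 0 := y.2
    show (f y.1, (0:G)) = (0 : M × G)
    rw [hy]; rfl⟩
  map_add' x y := rfl
  map_smul' c x := rfl
  left_inv x := by
    apply Subtype.ext
    have hx : (f x.1.1, x.1.2) = (0 : M × G) := x.2
    have h2 : x.1.2 = 0 := congrArg Prod.snd hx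
    exact Prod.ext rfl h2.symm
  right_inv y := rfl

theorem projDimLE_prod_free : ∀ (e : ℕ) {M : Type u} [AddCommGroup M] [Module R M]
    (κ : Type u), ProjDimLE R e M → ProjDimLE R e (M × (κ →₀ R))
  | 0, M, _, _, κ, h => by
    have : Module.Projective R M := h
    exact (inferInstance : Module.Projective R (M × (κ →₀ R)))
  | (e+1), M, _, _, κ, h => by
    obtain ⟨ι, f, hs, hk⟩ := h
    let eqv : ((ι ⊕ κ) →₀ R) ≃ₗ[R] (ι →₀ R) × (κ →₀ R) := Finsupp.sumFinsuppLEquivProdFinsupp R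
    let g : ((ι ⊕ κ) →₀ R) →ₗ[R] M × (κ →₀ R) :=
      (f.prodMap (LinearMap.id : (κ →₀ R) →ₗ[R] (κ →₀ R))) ∘ₗ eqv.toLinearMap
    refine ⟨ι ⊕ κ, g, ?_, ?_⟩
    · intro x
      obtain ⟨y, hy⟩ := hs x.1
      exact ⟨eqv.symm (y, x.2), by simp [g, hy]⟩
    · exact projDimLE_of_equiv e
        (((kerCompEquiv _ eqv).trans (kerProdMapIdEquiv f)).symm) hk


theorem projDimLE_cancel_free : ∀ (e : ℕ) {M : Type u} [AddCommGroup M] [Module R M]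
    (κ : Type u), ProjDimLE R e (M × (κ →₀ R)) → ProjDimLE R e M
  | 0, M, _, _, κ, h => by
    haveI : Module.Projective R (M × (κ →₀ R)) := h
    exact Module.Projective.of_split (LinearMap.inl R M (κ →₀ R)) (LinearMap.fst R M (κ →₀ R))
      (by ext x; simp)
  | (e+1), M, _, _, κ, h => by
    obtain ⟨ι, f, hs, hk⟩ := h
    set π : (ι →₀ R) →ₗ[R] M := LinearMap.fst R M (κ →₀ R) ∘ₗ f with hπ
    have hπs : Function.Surjective π := by
      intro m
      obtain ⟨x, hx⟩ := hs (m, 0)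
      exact ⟨x, by simp [hπ, hx]⟩
    have hle : LinearMap.ker f ≤ LinearMap.ker π := by
      intro x hx
      simp only [LinearMap.mem_ker] at hx ⊢
      simp [hπ, hx]
    set ι₀ : (LinearMap.ker f) →ₗ[R] (LinearMap.ker π) := Submodule.inclusion hle with hι₀
    set ρ : (LinearMap.ker π) →ₗ[R] (κ →₀ R) :=
      LinearMap.snd R M (κ →₀ R) ∘ₗ f ∘ₗ (LinearMap.ker π).subtype with hρ
    have hι₀inj : Function.Injective ι₀ := Submodule.inclusion_injective hle
    have hρs : Function.Surjective ρ := by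
      intro y
      obtain ⟨x, hx⟩ := hs (0, y)
      have hxker : x ∈ LinearMap.ker π := by simp [hπ, LinearMap.mem_ker, hx]
      exact ⟨⟨x, hxker⟩, by simp [hρ, hx]⟩
    have hexact : LinearMap.range ι₀ = LinearMap.ker ρ := by
      apply le_antisymm
      · rintro _ ⟨z, rfl⟩
        have hz : f z.1 = 0 := z.2
        simp [hρ, LinearMap.mem_ker, hι₀, Submodule.inclusion, hz]
      · rintro ⟨x, hxπ⟩ hxρ
        have h1 : (f x).1 = 0 := by simpa [hπ, LinearMap.mem_ker] using hxπ
        have h2 : (f x).2 = 0 := by simpa [hρ, LinearMap.mem_ker] using hxρ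
        have hfx : f x = 0 := by
          rw [← Prod.mk.eta (p := f x), h1, h2]; rfl
        exact ⟨⟨x, hfx⟩, rfl⟩
    obtain ⟨s, hs'⟩ := Module.projective_lifting_property ρ LinearMap.id hρs
    obtain ⟨eqv⟩ := equiv_of_section (N := LinearMap.ker f) (X := LinearMap.ker π) (M := κ →₀ R) ι₀ ρ hι₀inj hρs hexact s hs'
    refine ⟨ι, π, hπs, ?_⟩
    exact projDimLE_of_equiv e eqv.symm (projDimLE_prod_free e κ hk)

theorem projDimLE_succ : ∀ (e : ℕ) {M : Type u} [AddCommGroup M] [Module R M],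
    ProjDimLE R e M → ProjDimLE R (e+1) M
  | 0, M, _, _, h => by
    haveI : Module.Projective R M := h
    set f : (M →₀ R) →ₗ[R] M := Finsupp.linearCombination R (id : M → M) with hfdef
    have hfs : Function.Surjective f := by
      intro m
      exact ⟨Finsupp.single m 1, by simp [hfdef]⟩
    obtain ⟨s, hs⟩ := Module.projective_lifting_property f LinearMap.id hfs
    have hrange : LinearMap.range (LinearMap.ker f).subtype = LinearMap.ker f :=
      Submodule.range_subtype _
    obtain ⟨r, hr, -⟩ := retraction_of_section (N := LinearMap.ker f) (LinearMap.ker f).subtype f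
      (LinearMap.ker f).injective_subtype hrange s hs
    exact ⟨M, f, hfs, Module.Projective.of_split (LinearMap.ker f).subtype r hr⟩
  | (e+1), M, _, _, h => by
    obtain ⟨ι, f, hs, hk⟩ := h
    exact ⟨ι, f, hs, projDimLE_succ e hk⟩

/-- One half of Schanuel's lemma construction: the pullback is `ker q × F'`. -/
theorem schanuel_aux {F F' K : Type u} [AddCommGroup F] [Module R F] [AddCommGroup F']
    [Module R F'] [AddCommGroup K] [Module R K] [Module.Projective R F']
    (q : F →ₗ[R] K) (q' : F' →ₗ[R] K) (hq : Function.Surjective q) :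
    Nonempty ((LinearMap.ker (q ∘ₗ LinearMap.fst R F F' - q' ∘ₗ LinearMap.snd R F F')) ≃ₗ[R]
      (LinearMap.ker q) × F') := by
  set P := LinearMap.ker (q ∘ₗ LinearMap.fst R F F' - q' ∘ₗ LinearMap.snd R F F') with hP
  have hmem : ∀ x : F × F', x ∈ P ↔ q x.1 = q' x.2 := by
    intro x; simp [hP, LinearMap.mem_ker, sub_eq_zero]
  set ι₀ : (LinearMap.ker q) →ₗ[R] P := LinearMap.codRestrict P
    (LinearMap.inl R F F' ∘ₗ (LinearMap.ker q).subtype)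
    (fun z => by rw [hmem]; have : q z.1 = 0 := z.2; simp [this]) with hι₀
  set π' : P →ₗ[R] F' := LinearMap.snd R F F' ∘ₗ P.subtype with hπ'
  have hι₀inj : Function.Injective ι₀ := by
    intro z z' hzz
    have : (z : F) = (z' : F) := congrArg (fun w => (Subtype.val w).1) hzz
    exact Subtype.ext this
  have hπ's : Function.Surjective π' := by
    intro x'
    obtain ⟨x, hx⟩ := hq (q' x')
    exact ⟨⟨(x, x'), (hmem _).2 hx⟩, rfl⟩
  have hexact : LinearMap.range ι₀ = LinearMap.ker π' := by
    apply le_antisymm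
    · rintro _ ⟨z, rfl⟩
      simp [hπ', hι₀, LinearMap.mem_ker]
    · rintro ⟨⟨x, x'⟩, hxx⟩ hk
      have hx' : x' = 0 := hk
      have hqx : q x = 0 := by
        have := (hmem _).1 hxx
        simpa [hx'] using this
      exact ⟨⟨x, hqx⟩, by apply Subtype.ext; simp [hι₀, hx']⟩
  obtain ⟨t, ht⟩ := Module.projective_lifting_property q q' hq
  set s : F' →ₗ[R] P := LinearMap.codRestrict P (LinearMap.prod t LinearMap.id)
    (fun x' => by rw [hmem]; simpa using congrArg (fun φ => φ x') ht) with hsdef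
  have hsec : π' ∘ₗ s = LinearMap.id := by ext x'; simp [hπ', hsdef]
  exact equiv_of_section ι₀ π' hι₀inj hπ's hexact s hsec

theorem schanuel {F F' K : Type u} [AddCommGroup F] [Module R F] [AddCommGroup F']
    [Module R F'] [AddCommGroup K] [Module R K] [Module.Projective R F] [Module.Projective R F']
    (q : F →ₗ[R] K) (q' : F' →ₗ[R] K) (hq : Function.Surjective q)
    (hq' : Function.Surjective q') :
    Nonempty ((LinearMap.ker q × F') ≃ₗ[R] (LinearMap.ker q' × F)) := by
  obtain ⟨e1⟩ := schanuel_aux q q' hq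
  obtain ⟨e2⟩ := schanuel_aux q' q hq'
  set P := LinearMap.ker (q ∘ₗ LinearMap.fst R F F' - q' ∘ₗ LinearMap.snd R F F') with hP
  set P' := LinearMap.ker (q' ∘ₗ LinearMap.fst R F' F - q ∘ₗ LinearMap.snd R F' F) with hP'
  have hswap : Nonempty (P ≃ₗ[R] P') := by
    refine ⟨((LinearEquiv.prodComm R F F').submoduleMap P).trans (LinearEquiv.ofEq _ _ ?_)⟩
    ext y
    constructor
    · rintro ⟨x, hx, rfl⟩
      have : q x.1 = q' x.2 := by simpa [hP, LinearMap.mem_ker, sub_eq_zero] using hx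
      simp [hP', LinearMap.mem_ker, sub_eq_zero, LinearEquiv.prodComm]
      exact this.symm
    · intro hy
      refine ⟨(y.2, y.1), ?_, by apply Prod.ext <;> rfl⟩
      have : q' y.1 = q y.2 := by simpa [hP', LinearMap.mem_ker, sub_eq_zero] using hy
      simp [hP, LinearMap.mem_ker, sub_eq_zero]
      exact this.symm
  obtain ⟨e3⟩ := hswap
  exact ⟨e1.symm.trans (e3.trans e2)⟩

theorem projDimLE'_pred_ker {K : Type u} [AddCommGroup K] [Module R K] {k : ℕ}
    (q : (Fin k → R) →ₗ[R] K) (hq : Function.Surjective q) {d : ℕ∞} (hd : 1 ≤ d)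
    (hKd : ProjDimLE' R d K) : ProjDimLE' R (d - 1) (LinearMap.ker q) := by
  intro m hm
  cases d with
  | top => exact absurd hm (by simp)
  | coe dd =>
    have hdd1 : 1 ≤ dd := by exact_mod_cast hd
    have hmd : m = dd - 1 := by
      have : ((m : ℕ∞)) = ((dd - 1 : ℕ) : ℕ∞) := by
        rw [hm, ENat.coe_sub, Nat.cast_one]
      exact_mod_cast this
    have hdd : dd = m + 1 := by omega
    have hK : ProjDimLE R (m + 1) K := by
      have := hKd dd (by rfl)
      rwa [hdd] at this
    obtain ⟨ι, f, hfs, hfk⟩ := hK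
    haveI : Module.Projective R (Fin k → R) := inferInstance
    obtain ⟨eqv⟩ := schanuel q f hq hfs
    have h1 : ProjDimLE R m ((LinearMap.ker f) × ((ULift.{u} (Fin k)) →₀ R)) :=
      projDimLE_prod_free (R := R) m (ULift.{u} (Fin k)) hfk
    have e2 : ((LinearMap.ker f) × ((ULift.{u} (Fin k)) →₀ R)) ≃ₗ[R]
        ((LinearMap.ker f) × (Fin k → R)) :=
      LinearEquiv.prodCongr (LinearEquiv.refl R _)
        ((Finsupp.domLCongr Equiv.ulift).trans (Finsupp.linearEquivFunOnFinite R R (Fin k)))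
    have h2 : ProjDimLE R m ((LinearMap.ker f) × (Fin k → R)) := projDimLE_of_equiv m e2 h1
    have h3 : ProjDimLE R m ((LinearMap.ker q) × (ι →₀ R)) :=
      projDimLE_of_equiv m eqv.symm h2
    exact projDimLE_cancel_free m ι h3

theorem projDimLE'_mono {M : Type u} [AddCommGroup M] [Module R M] {d : ℕ∞} (hd : 1 ≤ d)
    (h : ProjDimLE' R (d - 1) M) : ProjDimLE' R d M := by
  intro m hm
  cases d with
  | top => exact absurd hm (by simp)
  | coe dd =>
    have hdd1 : 1 ≤ dd := by exact_mod_cast hd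
    have hmd : m = dd := by exact_mod_cast hm
    have h1 : ProjDimLE R (dd - 1) M := by
      apply h
      rw [← hm, hmd, ENat.coe_sub, Nat.cast_one]
    have := projDimLE_succ (dd - 1) h1
    rwa [Nat.sub_add_cancel hdd1, ← hmd] at this

theorem factor_through_surjective {X M Y : Type u} [AddCommGroup X] [Module R X]
    [AddCommGroup M] [Module R M] [AddCommGroup Y] [Module R Y]
    (p : X →ₗ[R] M) (hp : Function.Surjective p) (t : X →ₗ[R] Y)
    (h : LinearMap.ker p ≤ LinearMap.ker t) : ∃ σ : M →ₗ[R] Y, σ ∘ₗ p = t := by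
  let e := p.quotKerEquivOfSurjective hp
  refine ⟨(LinearMap.ker p).liftQ t h ∘ₗ e.symm.toLinearMap, ?_⟩
  ext x
  have he : e ((LinearMap.ker p).mkQ x) = p x := rfl
  have hsymm : e.symm (p x) = (LinearMap.ker p).mkQ x := by
    rw [← he, LinearEquiv.symm_apply_apply]
  simp only [LinearMap.comp_apply, LinearEquiv.coe_coe, hsymm]
  simp

theorem factor_through_injective {Z X C : Type u} [AddCommGroup Z] [Module R Z]
    [AddCommGroup X] [Module R X] [AddCommGroup C] [Module R C]
    (i : C →ₗ[R] X) (hi : Function.Injective i) (φ : Z →ₗ[R] X)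
    (h : ∀ z, φ z ∈ LinearMap.range i) : ∃ ψ : Z →ₗ[R] C, i ∘ₗ ψ = φ := by
  refine ⟨(LinearEquiv.ofInjective i hi).symm.toLinearMap ∘ₗ
    LinearMap.codRestrict (LinearMap.range i) φ h, ?_⟩
  ext z
  simp only [LinearMap.comp_apply, LinearEquiv.coe_coe]
  have : i ((LinearEquiv.ofInjective i hi).symm
      ((LinearMap.codRestrict (LinearMap.range i) φ h) z))
      = ((LinearEquiv.ofInjective i hi) ((LinearEquiv.ofInjective i hi).symm
        ((LinearMap.codRestrict (LinearMap.range i) φ h) z)) : X) := by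
    rw [LinearEquiv.ofInjective_apply]
  rw [this, LinearEquiv.apply_symm_apply]
  rfl

theorem part1 (R : Type u) [Ring R] (n : ℕ) (d : ℕ∞) (hd : 1 ≤ d)
    (A B C : Type u) [AddCommGroup A] [Module R A] [AddCommGroup B] [Module R B]
    [AddCommGroup C] [Module R C] (f : A →ₗ[R] B) (g : B →ₗ[R] C)
    (hf : Function.Injective f) (hg : Function.Surjective g)
    (hex : LinearMap.range f = LinearMap.ker g)
    (hA : FPdInj R n (d - 1) A) (hB : FPdInj R (n + 1) d B) : FPdInj R (n + 1) d C := by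
  intro K _ _ hK hKd X _ _ i p hi hp hexX
  obtain ⟨k, q, hq, hL⟩ := hK
  have hLd : ProjDimLE' R (d - 1) (LinearMap.ker q) := projDimLE'_pred_ker q hq hd hKd
  obtain ⟨φ, hφ⟩ := Module.projective_lifting_property p q hp
  have hφ' : ∀ x, p (φ x) = q x := fun x => congrArg (fun ρ => ρ x) hφ
  have hmem : ∀ l : LinearMap.ker q, φ l ∈ LinearMap.range i := by
    intro l
    rw [hexX, LinearMap.mem_ker, hφ' l]
    exact l.2
  obtain ⟨ψ, hψ⟩ := factor_through_injective i hi (φ ∘ₗ (LinearMap.ker q).subtype)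
    (fun l => hmem l)
  have hψ' : ∀ l : LinearMap.ker q, i (ψ l) = φ l :=
    fun l => congrArg (fun ρ => ρ l) hψ
  obtain ⟨ψ'', hψ''⟩ := lift_of_ext1Zero (hA (LinearMap.ker q) hL hLd) f g hf hg hex ψ
  have hψ''' : ∀ l, g (ψ'' l) = ψ l := fun l => congrArg (fun ρ => ρ l) hψ''
  -- pushout X' = (B × F) / W
  set W : Submodule R (B × (Fin k → R)) :=
    LinearMap.range (LinearMap.prod (-ψ'') (LinearMap.ker q).subtype) with hW
  have hWq : W ≤ LinearMap.ker (q ∘ₗ LinearMap.snd R B (Fin k → R)) := by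
    rintro _ ⟨l, rfl⟩
    simpa [LinearMap.mem_ker] using l.2
  set πK : ((B × (Fin k → R)) ⧸ W) →ₗ[R] K :=
    W.liftQ (q ∘ₗ LinearMap.snd R B (Fin k → R)) hWq with hπK
  set β : B →ₗ[R] ((B × (Fin k → R)) ⧸ W) := W.mkQ ∘ₗ LinearMap.inl R B (Fin k → R) with hβ
  have hβinj : Function.Injective β := by
    intro b b' hbb
    have : ((b : B), (0 : Fin k → R)) - (b', 0) ∈ W := by
      rw [← Submodule.Quotient.eq]
      exact hbb
    obtain ⟨l, hl⟩ := this
    have hl2 : ((l : Fin k → R)) = 0 := by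
      have h2 := congrArg Prod.snd hl
      simpa using h2
    have hl0 : l = 0 := Subtype.ext hl2
    have hl1 : -ψ'' l = b - b' := congrArg Prod.fst hl
    rw [hl0] at hl1
    simpa [sub_eq_zero] using hl1.symm
  have hπKsurj : Function.Surjective πK := by
    intro kk
    obtain ⟨x, hx⟩ := hq kk
    exact ⟨W.mkQ (0, x), by simp [hπK, hx]⟩
  have hexact : LinearMap.range β = LinearMap.ker πK := by
    apply le_antisymm
    · rintro _ ⟨b, rfl⟩
      simp [hβ, hπK, LinearMap.mem_ker]
    · intro z hz
      obtain ⟨⟨b, x⟩, rfl⟩ := W.mkQ_surjective z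
      have hqx : q x = 0 := by simpa [hπK, LinearMap.mem_ker] using hz
      refine ⟨b + ψ'' ⟨x, hqx⟩, ?_⟩
      show W.mkQ (b + ψ'' ⟨x, hqx⟩, 0) = W.mkQ (b, x)
      simp only [Submodule.mkQ_apply]
      rw [Submodule.Quotient.eq]
      exact ⟨-⟨x, hqx⟩, by apply Prod.ext <;> simp⟩
  obtain ⟨ρ, hρ⟩ := hB K ⟨k, q, hq, hL⟩ hKd _ β πK hβinj hπKsurj hexact
  obtain ⟨σ, hσ⟩ := section_of_retraction β πK hπKsurj hexact ρ hρ
  have hWΘ : W ≤ LinearMap.ker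
      (i ∘ₗ (g ∘ₗ LinearMap.fst R B (Fin k → R)) + φ ∘ₗ LinearMap.snd R B (Fin k → R)) := by
    rintro _ ⟨l, rfl⟩
    simp only [LinearMap.mem_ker, LinearMap.add_apply, LinearMap.comp_apply,
      LinearMap.prod_apply, Function.prod, LinearMap.fst_apply, LinearMap.snd_apply,
      LinearMap.neg_apply, map_neg]
    rw [hψ''' l, hψ' l]
    simp
  set Θ : ((B × (Fin k → R)) ⧸ W) →ₗ[R] X := W.liftQ
    (i ∘ₗ (g ∘ₗ LinearMap.fst R B (Fin k → R)) + φ ∘ₗ LinearMap.snd R B (Fin k → R)) hWΘ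
    with hΘ
  have hpΘ : p ∘ₗ Θ = πK := by
    apply Submodule.linearMap_qext
    apply LinearMap.ext
    rintro ⟨b, x⟩
    have hpi : p (i (g b)) = 0 := by
      have : i (g b) ∈ LinearMap.ker p := hexX ▸ LinearMap.mem_range_self i _
      simpa using this
    simp [hΘ, hπK, hpi, hφ']
  refine (retraction_of_section i p hi hexX (Θ ∘ₗ σ) ?_).imp (fun r hr => hr.1)
  rw [← LinearMap.comp_assoc, hpΘ, hσ]

theorem exists_injective_embedding (R : Type u) [Ring R] (N : Type u) [AddCommGroup N]
    [Module R N] :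
    ∃ (E : Type u) (_ : AddCommGroup E) (_ : Module R E) (j : N →ₗ[R] E),
      Function.Injective j ∧ Module.Injective R E := by
  let Nc : ModuleCat.{u} R := ModuleCat.of R N
  let E := CategoryTheory.Injective.under Nc
  have hE : CategoryTheory.Injective E := CategoryTheory.Injective.injective_under Nc
  let j : Nc ⟶ E := CategoryTheory.Injective.ι Nc
  have hmono : CategoryTheory.Mono j := inferInstance
  refine ⟨E, inferInstance, inferInstance, j.hom, ?_, ?_⟩
  · exact (ModuleCat.mono_iff_injective j).mp hmono
  · exact Module.injective_module_of_injective_object R E (inj := hE)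

theorem quotient_inj_fpdInj {N E : Type u} [AddCommGroup N] [Module R N]
    [AddCommGroup E] [Module R E] (j : N →ₗ[R] E) (hj : Function.Injective j)
    (hEinj : Module.Injective R E) {n : ℕ} {d : ℕ∞} (hd : 1 ≤ d)
    (hN : FPdInj R n d N) : FPdInj R (n + 1) d (E ⧸ LinearMap.range j) := by
  intro K _ _ hK hKd Y _ _ a b ha hb hexY
  obtain ⟨k, q, hq, hL⟩ := hK
  have hLd : ProjDimLE' R (d - 1) (LinearMap.ker q) := projDimLE'_pred_ker q hq hd hKd
  have hLd' : ProjDimLE' R d (LinearMap.ker q) := projDimLE'_mono hd hLd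
  obtain ⟨φ, hφ⟩ := Module.projective_lifting_property b q hb
  have hφ' : ∀ x, b (φ x) = q x := fun x => congrArg (fun ρ => ρ x) hφ
  have hmem : ∀ l : LinearMap.ker q, φ l ∈ LinearMap.range a := by
    intro l
    rw [hexY, LinearMap.mem_ker, hφ' l]
    exact l.2
  obtain ⟨ψ, hψ⟩ := factor_through_injective a ha (φ ∘ₗ (LinearMap.ker q).subtype) hmem
  have hψ' : ∀ l : LinearMap.ker q, a (ψ l) = φ l := fun l => congrArg (fun ρ => ρ l) hψ
  set π : E →ₗ[R] (E ⧸ LinearMap.range j) := (LinearMap.range j).mkQ with hπdef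
  have hexE : LinearMap.range j = LinearMap.ker π := (Submodule.ker_mkQ _).symm
  obtain ⟨ψt, hψt⟩ := lift_of_ext1Zero (hN (LinearMap.ker q) hL hLd') j π hj
    (LinearMap.range j).mkQ_surjective hexE ψ
  have hψt' : ∀ l, π (ψt l) = ψ l := fun l => congrArg (fun ρ => ρ l) hψt
  obtain ⟨Φ, hΦ⟩ := hEinj.out (LinearMap.ker q).subtype (LinearMap.ker q).injective_subtype ψt
  set s₀ : (Fin k → R) →ₗ[R] Y := φ - a ∘ₗ π ∘ₗ Φ with hs₀
  have hker : LinearMap.ker q ≤ LinearMap.ker s₀ := by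
    intro x hx
    have h1 : Φ x = ψt ⟨x, hx⟩ := hΦ ⟨x, hx⟩
    simp only [LinearMap.mem_ker, hs₀, LinearMap.sub_apply, LinearMap.comp_apply]
    rw [h1, hψt' ⟨x, hx⟩, hψ' ⟨x, hx⟩]
    simp
  obtain ⟨σ, hσ⟩ := factor_through_surjective q hq s₀ hker
  have hσ' : ∀ x, σ (q x) = s₀ x := fun x => congrArg (fun ρ => ρ x) hσ
  have hba : ∀ nn, b (a nn) = 0 := by
    intro nn
    have : a nn ∈ LinearMap.ker b := hexY ▸ LinearMap.mem_range_self a nn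
    simpa using this
  have hbσ : b ∘ₗ σ = LinearMap.id := by
    ext kk
    obtain ⟨x, rfl⟩ := hq kk
    rw [LinearMap.comp_apply, hσ' x]
    simp [hs₀, hφ', hba]
  obtain ⟨r, hr, -⟩ := retraction_of_section a b ha hexY σ hbσ
  exact ⟨r, hr⟩

theorem part2 (R : Type u) [Ring R] (n : ℕ) (d : ℕ∞) (hd : 1 ≤ d)
    (A B C : Type u) [AddCommGroup A] [Module R A] [AddCommGroup B] [Module R B]
    [AddCommGroup C] [Module R C] (f : A →ₗ[R] B) (g : B →ₗ[R] C)
    (hf : Function.Injective f) (hg : Function.Surjective g)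
    (hex : LinearMap.range f = LinearMap.ker g)
    (hB : FPdProj R n d B) (hC : FPdProj R (n + 1) d C) : FPdProj R n d A := by
  intro N _ _ hN X _ _ i p hi hp hexX
  obtain ⟨E, iE1, iE2, j, hj, hEinj⟩ := exists_injective_embedding R N
  set N' := E ⧸ LinearMap.range j with hN'def
  set π : E →ₗ[R] N' := (LinearMap.range j).mkQ with hπdef
  have hexE : LinearMap.range j = LinearMap.ker π := (Submodule.ker_mkQ _).symm
  have hN' : FPdInj R (n + 1) d N' := quotient_inj_fpdInj j hj hEinj hd hN
  obtain ⟨h, hh⟩ := hEinj.out i hi j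
  have hker : LinearMap.ker p ≤ LinearMap.ker (π ∘ₗ h) := by
    intro x hx
    obtain ⟨nn, rfl⟩ : x ∈ LinearMap.range i := hexX ▸ hx
    rw [LinearMap.mem_ker, LinearMap.comp_apply, hh nn]
    have : j nn ∈ LinearMap.ker π := hexE ▸ LinearMap.mem_range_self j nn
    simpa using this
  obtain ⟨hbar, hhbar⟩ := factor_through_surjective p hp (π ∘ₗ h) hker
  have hhbar' : ∀ x, hbar (p x) = π (h x) := fun x => congrArg (fun ρ => ρ x) hhbar
  obtain ⟨v, hv⟩ := extend_of_ext1Zero (hC N' hN') f g hf hg hex hbar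
  have hv' : ∀ aa, v (f aa) = hbar aa := fun aa => congrArg (fun ρ => ρ aa) hv
  obtain ⟨w, hw⟩ := lift_of_ext1Zero (hB N hN) j π hj (LinearMap.range j).mkQ_surjective hexE v
  have hw' : ∀ bb, π (w bb) = v bb := fun bb => congrArg (fun ρ => ρ bb) hw
  set t : X →ₗ[R] E := h - (w ∘ₗ f) ∘ₗ p with htdef
  have hmem : ∀ x, t x ∈ LinearMap.range j := by
    intro x
    rw [hexE, LinearMap.mem_ker]
    simp only [htdef, LinearMap.sub_apply, LinearMap.comp_apply, map_sub]
    rw [hw', hv', hhbar']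
    simp
  obtain ⟨r, hr⟩ := factor_through_injective j hj t hmem
  have hr' : ∀ x, j (r x) = t x := fun x => congrArg (fun ρ => ρ x) hr
  refine ⟨r, ?_⟩
  ext nn
  have hpi : p (i nn) = 0 := by
    have : i nn ∈ LinearMap.ker p := hexX ▸ LinearMap.mem_range_self i nn
    simpa using this
  apply hj
  rw [LinearMap.comp_apply, LinearMap.id_apply, hr' (i nn)]
  simp only [htdef, LinearMap.sub_apply, LinearMap.comp_apply, hpi, hh nn]
  simp

/-- Let `A ↣ B ↠ C` be a short exact sequence.  If `A` is `FPₙ^{≤d-1}`-injective and `B` is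
`FPₙ₊₁^{≤d}`-injective, then `C` is `FPₙ₊₁^{≤d}`-injective.  Dually, if `B` is
`FPₙ^{≤d}`-projective and `C` is `FPₙ₊₁^{≤d}`-projective, then `A` is `FPₙ^{≤d}`-projective. -/
theorem fpdInj_fpdProj_ses (R : Type u) [Ring R] (n : ℕ) (hn : 1 ≤ n) (d : ℕ∞) (hd : 1 ≤ d)
    (A B C : Type u) [AddCommGroup A] [Module R A] [AddCommGroup B] [Module R B]
    [AddCommGroup C] [Module R C] (f : A →ₗ[R] B) (g : B →ₗ[R] C)
    (hf : Function.Injective f) (hg : Function.Surjective g)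
    (hex : LinearMap.range f = LinearMap.ker g) :
    (FPdInj R n (d - 1) A → FPdInj R (n + 1) d B → FPdInj R (n + 1) d C) ∧
    (FPdProj R n d B → FPdProj R (n + 1) d C → FPdProj R n d A) :=
  ⟨fun hA hB => part1 R n d hd A B C f g hf hg hex hA hB,
   fun hB hC => part2 R n d hd A B C f g hf hg hex hB hC⟩
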